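/- For every integer n ≥ 2, the number of paths in CH′(n) (paths in CH(n) whose last step is D₁) equals the number of 3-Motzkin paths of length n−2. -/

import Mathlib

/-- Steps of a path in `CH(n)`: `U = (1,1)`, labeled down steps `D1, D2` (each `(1,-1)`)
and labeled horizontal steps `H0, H1, H2` (each `(1,0)`). -/
inductive CStep : Type
  | U : CStep
  | D1 : CStep
  | D2 : CStep
  | H0 : CStep
  | H1 : CStep
  | H2 : CStep
  deriving DecidableEq

/-- The contribution of a step to the y-coordinate. -/
def CStep.eff : CStep → ℤ
  | U => 1
  | D1 => -1
  | D2 => -1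
  | H0 => 0
  | H1 => 0
  | H2 => 0

/-- The height (y-coordinate of the starting point) of the `i`-th step (0-indexed). -/
def cHeight (L : List CStep) (i : ℕ) : ℤ := ((L.take i).map CStep.eff).sum

/-- `L` is a path in `CH(n)`: it has `n` steps, ends at height `0`, never goes below
the x-axis, every step `H_ℓ` or `D_ℓ` has height at least `ℓ`, and every step `H2` or `D2`
is not the first step and is immediately preceded by a step in `{U, H1, H2}`. -/
def IsCH (L : List CStep) (n : ℕ) : Prop :=
  L.length = n ∧ (L.map CStep.eff).sum = 0 ∧ (∀ i, 0 ≤ cHeight L i) ∧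
  (∀ i, L[i]? = some CStep.D1 → 1 ≤ cHeight L i) ∧
  (∀ i, L[i]? = some CStep.D2 → 2 ≤ cHeight L i) ∧
  (∀ i, L[i]? = some CStep.H1 → 1 ≤ cHeight L i) ∧
  (∀ i, L[i]? = some CStep.H2 → 2 ≤ cHeight L i) ∧
  (∀ i, (L[i]? = some CStep.H2 ∨ L[i]? = some CStep.D2) →
    1 ≤ i ∧ (L[i-1]? = some CStep.U ∨ L[i-1]? = some CStep.H1 ∨ L[i-1]? = some CStep.H2))

/-- Steps of a 3-Motzkin path: `U = (1,1)`, `D = (1,-1)` and three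
labeled horizontal steps `H0, H1, H2` (each equal to `(1,0)`). -/
inductive MStep : Type
  | U : MStep
  | D : MStep
  | H0 : MStep
  | H1 : MStep
  | H2 : MStep
  deriving DecidableEq

/-- The contribution of a step to the y-coordinate. -/
def MStep.eff : MStep → ℤ
  | U => 1
  | D => -1
  | H0 => 0
  | H1 => 0
  | H2 => 0

/-- The height (y-coordinate of the starting point) of the `i`-th step (0-indexed). -/
def mHeight (L : List MStep) (i : ℕ) : ℤ := ((L.take i).map MStep.eff).sum

/-- `L` is a 3-Motzkin path of length `n`: it has `n` steps, ends at height `0`,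
and never goes below the x-axis. -/
def IsMotzkin3 (L : List MStep) (n : ℕ) : Prop :=
  L.length = n ∧ (L.map MStep.eff).sum = 0 ∧ ∀ i, 0 ≤ mHeight L i

/-- The number of `H2` steps of `L` of positive height. -/
def posH2Steps (L : List MStep) : ℕ :=
  ((Finset.range L.length).filter
    (fun i => L[i]? = some MStep.H2 ∧ 0 < mHeight L i)).card

def mm : ℕ → ℤ → ℕ
  | 0, h => if h = 0 then 1 else 0
  | n+1, h => if h < 0 then 0 else mm n (h+1) + (if 1 ≤ h then mm n (h-1) else 0) + 3 * mm n h

lemma mm_neg (n : ℕ) (h : ℤ) (hh : h < 0) : mm n h = 0 := by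
  cases n <;> simp [mm] <;> omega

lemma mm_rec (n : ℕ) (h : ℤ) (hh : 0 ≤ h) :
    mm (n+1) h = mm n (h+1) + mm n (h-1) + 3 * mm n h := by
  rw [mm]
  rcases eq_or_lt_of_le hh with h0 | h1
  · rw [mm_neg n (h-1) (by omega)]; simp [← h0]
  · simp [show ¬ h < 0 by omega, show 1 ≤ h by omega]

def cc : ℕ → ℤ → Bool → ℕ
  | 0, h, _ => if h = 1 then 1 else 0
  | n+1, h, b => if h < 0 then 0 else
      cc n (h+1) true
      + (if 1 ≤ h then cc n (h-1) false else 0)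
      + (if 2 ≤ h ∧ b = true then cc n (h-1) false else 0)
      + cc n h false
      + (if 1 ≤ h then cc n h true else 0)
      + (if 2 ≤ h ∧ b = true then cc n h true else 0)

lemma cc_rec (n : ℕ) (h : ℤ) (b : Bool) (hh : 0 ≤ h) :
    cc (n+1) h b =
      cc n (h+1) true
      + (if 1 ≤ h then cc n (h-1) false + cc n h true else 0)
      + (if 2 ≤ h ∧ b = true then cc n (h-1) false + cc n h true else 0)
      + cc n h false := by
  rw [cc]; split_ifs <;> omega

lemma cc_b_irrel (n : ℕ) (h : ℤ) (b : Bool) (hh : h < 2) : cc n h b = cc n h false := by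
  cases n with
  | zero => simp [cc]
  | succ n => rw [cc, cc]; simp [show ¬ 2 ≤ h by omega]

lemma ccAB (n : ℕ) :
    (∀ h : ℤ, 0 ≤ h → cc (n+1) h false = mm n (h-2) + 2 * mm n (h-1) + mm n h) ∧
    (∀ h : ℤ, 2 ≤ h → cc (n+1) h true = 2 * mm n (h-2) + 3 * mm n (h-1) + mm n h) := by
  induction n with
  | zero =>
    constructor <;> intro h hh <;>
      simp only [cc, mm, Bool.false_eq_true, and_false, if_false, and_true] <;>
      split_ifs <;> omega
  | succ n ih =>
    obtain ⟨A, B⟩ := ih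
    constructor
    · intro h hh
      rw [cc_rec _ _ _ hh]
      simp only [Bool.false_eq_true, and_false, if_false]
      rcases (by omega : h = 0 ∨ h = 1 ∨ 2 ≤ h) with h0 | h0 | h0
      · subst h0
        norm_num
        rw [cc_b_irrel (n+1) 1 true (by norm_num), A 1 (by norm_num), A 0 le_rfl,
          mm_rec (n := n) 0 le_rfl]
        have m1 : mm n (-1) = 0 := mm_neg _ _ (by norm_num)
        have m2 : mm n (-2) = 0 := mm_neg _ _ (by norm_num)
        have M1 : mm (n+1) (-1) = 0 := mm_neg _ _ (by norm_num)
        have M2 : mm (n+1) (-2) = 0 := mm_neg _ _ (by norm_num)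
        norm_num [m1, m2, M1, M2]
        omega
      · subst h0
        rw [if_pos (by norm_num : (1:ℤ) ≤ 1)]
        norm_num
        rw [cc_b_irrel (n+1) 1 true (by norm_num), B 2 (by norm_num), A 0 le_rfl,
          A 1 (by norm_num), mm_rec (n := n) 0 le_rfl, mm_rec (n := n) 1 (by norm_num)]
        have m1 : mm n (-1) = 0 := mm_neg _ _ (by norm_num)
        have m2 : mm n (-2) = 0 := mm_neg _ _ (by norm_num)
        have M1 : mm (n+1) (-1) = 0 := mm_neg _ _ (by norm_num)
        norm_num [m1, m2, M1]
        omega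
      · rw [if_pos (by omega : (1:ℤ) ≤ h)]
        rw [B (h+1) (by omega), A (h-1) (by omega), A h (by omega), B h h0,
          mm_rec n (h-2) (by omega), mm_rec n (h-1) (by omega), mm_rec n h (by omega)]
        ring_nf
    · intro h hh
      rw [cc_rec _ _ _ (by omega)]
      rw [if_pos (by omega : (1:ℤ) ≤ h), if_pos (⟨hh, rfl⟩ : 2 ≤ h ∧ (true:Bool) = true)]
      rw [B (h+1) (by omega), A (h-1) (by omega), A h (by omega), B h hh,
        mm_rec n (h-2) (by omega), mm_rec n (h-1) (by omega), mm_rec n h (by omega)]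
      ring_nf

def MOK : ℤ → List MStep → Prop
  | h, [] => h = 0
  | h, s :: t => 0 ≤ h ∧ MOK (h + s.eff) t

lemma mok_neg (h : ℤ) (L : List MStep) (hh : h < 0) : ¬ MOK h L := by
  cases L <;> simp [MOK] <;> omega

def Mset : ℕ → ℤ → Finset (List MStep)
  | 0, h => if h = 0 then {[]} else ∅
  | n+1, h => if h < 0 then ∅ else
      ((Mset n (h+1)).image (MStep.U :: ·))
      ∪ ((Mset n (h-1)).image (MStep.D :: ·))
      ∪ ((Mset n h).image (MStep.H0 :: ·))
      ∪ ((Mset n h).image (MStep.H1 :: ·))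
      ∪ ((Mset n h).image (MStep.H2 :: ·))

lemma mem_Mset : ∀ (n : ℕ) (h : ℤ) (L : List MStep), L ∈ Mset n h ↔ (L.length = n ∧ MOK h L)
  | 0, h, L => by
    rw [Mset]
    split_ifs with h0
    · subst h0
      cases L <;> simp [MOK]
    · cases L <;> simp [MOK] <;> omega
  | n+1, h, L => by
    rw [Mset]
    split_ifs with h0
    · constructor
      · simp
      · rintro ⟨hlen, hm⟩
        exact absurd hm (mok_neg _ _ h0)
    · cases L with
      | nil => simp [MOK]
      | cons s t =>
        have hU := mem_Mset n (h+1) t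
        have hD := mem_Mset n (h-1) t
        have hH := mem_Mset n h t
        cases s <;>
          simp [MOK, MStep.eff, hU, hD, hH, show 0 ≤ h by omega, List.cons.injEq, show h + -1 = h - 1 by ring]

lemma card_image_cons (s : Finset (List MStep)) (a : MStep) :
    (s.image (a :: ·)).card = s.card :=
  Finset.card_image_of_injective _ (fun _ _ h => by injection h)

lemma disjoint_cons_image {a b : MStep} (hab : a ≠ b) (s t : Finset (List MStep)) :
    Disjoint (s.image (a :: ·)) (t.image (b :: ·)) := by
  simp only [Finset.disjoint_left, Finset.mem_image]
  rintro x ⟨y, _, rfl⟩ ⟨z, _, hc⟩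
  exact hab (by injection hc with h1 _; exact h1.symm)

lemma card_Mset : ∀ (n : ℕ) (h : ℤ), (Mset n h).card = mm n h
  | 0, h => by rw [Mset, mm]; split_ifs <;> simp
  | n+1, h => by
    rw [Mset, mm]
    split_ifs with h0 h1
    · simp
    all_goals
      rw [Finset.card_union_of_disjoint, Finset.card_union_of_disjoint,
        Finset.card_union_of_disjoint, Finset.card_union_of_disjoint]
    · simp only [card_image_cons, card_Mset n]; omega
    case neg =>
      have hD : mm n (h-1) = 0 := mm_neg _ _ (by omega)
      simp only [card_image_cons, card_Mset n]; omega
    all_goals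
      first
        | exact disjoint_cons_image (by simp) _ _
        | (simp only [Finset.disjoint_union_left]
           and_intros <;> exact disjoint_cons_image (by simp) _ _)

lemma mHeight_cons_zero (s : MStep) (t : List MStep) : mHeight (s :: t) 0 = 0 := rfl

lemma mHeight_cons_succ (s : MStep) (t : List MStep) (i : ℕ) :
    mHeight (s :: t) (i+1) = s.eff + mHeight t i := by
  simp [mHeight, List.take_succ_cons]

lemma forall_nat_split (P : ℕ → Prop) : (∀ i, P i) ↔ P 0 ∧ ∀ i, P (i+1) :=
  ⟨fun H => ⟨H 0, fun i => H (i+1)⟩, fun ⟨h0, hs⟩ i => by cases i with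
    | zero => exact h0
    | succ i => exact hs i⟩

lemma mok_iff : ∀ (L : List MStep) (h : ℤ),
    MOK h L ↔ (h + (L.map MStep.eff).sum = 0 ∧ ∀ i, 0 ≤ h + mHeight L i)
  | [], h => by
    simp only [MOK, List.map_nil, List.sum_nil, add_zero]
    constructor
    · rintro rfl; exact ⟨rfl, fun i => by simp [mHeight]⟩
    · rintro ⟨h0, _⟩; exact h0
  | s :: t, h => by
    rw [MOK, mok_iff t (h + s.eff),
      forall_nat_split (fun i => 0 ≤ h + mHeight (s :: t) i)]
    simp only [mHeight_cons_zero, mHeight_cons_succ, List.map_cons, List.sum_cons, add_zero]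
    constructor
    · rintro ⟨h0, hsum, hpos⟩
      exact ⟨by linarith [hsum], h0, fun i => by linarith [hpos i]⟩
    · rintro ⟨hsum, h0, hpos⟩
      exact ⟨h0, by linarith, fun i => by linarith [hpos i]⟩

lemma isMotzkin3_iff (L : List MStep) (n : ℕ) :
    IsMotzkin3 L n ↔ L.length = n ∧ MOK 0 L := by
  rw [IsMotzkin3, mok_iff]
  simp

lemma card_motzkin (n : ℕ) : Nat.card {L : List MStep // IsMotzkin3 L n} = mm n 0 := by
  have e : {L : List MStep // IsMotzkin3 L n} ≃ {L : List MStep // L ∈ Mset n 0} :=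
    Equiv.subtypeEquivRight (fun L => by rw [isMotzkin3_iff, mem_Mset])
  rw [Nat.card_congr e, Nat.card_eq_finsetCard, card_Mset]

def CStep.cls : CStep → Bool
  | .U => true | .H1 => true | .H2 => true | _ => false

def allowedC : CStep → ℤ → Bool → Prop
  | .U, _, _ => True
  | .H0, _, _ => True
  | .D1, h, _ => 1 ≤ h
  | .H1, h, _ => 1 ≤ h
  | .D2, h, b => 2 ≤ h ∧ b = true
  | .H2, h, b => 2 ≤ h ∧ b = true

def COK : ℤ → Bool → List CStep → Prop
  | h, _, [] => h = 1
  | h, b, s :: t => 0 ≤ h ∧ allowedC s h b ∧ COK (h + s.eff) s.cls t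

def CIdx (h : ℤ) (b : Bool) (L : List CStep) : Prop :=
  h + (L.map CStep.eff).sum = 1 ∧
  (∀ i, 0 ≤ h + cHeight L i) ∧
  (∀ i, L[i]? = some CStep.D1 → 1 ≤ h + cHeight L i) ∧
  (∀ i, L[i]? = some CStep.D2 → 2 ≤ h + cHeight L i) ∧
  (∀ i, L[i]? = some CStep.H1 → 1 ≤ h + cHeight L i) ∧
  (∀ i, L[i]? = some CStep.H2 → 2 ≤ h + cHeight L i) ∧
  (∀ i, (L[i]? = some CStep.H2 ∨ L[i]? = some CStep.D2) →
    (i = 0 → b = true) ∧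
    (1 ≤ i → (L[i-1]? = some CStep.U ∨ L[i-1]? = some CStep.H1 ∨ L[i-1]? = some CStep.H2)))

lemma cHeight_cons_zero (s : CStep) (t : List CStep) : cHeight (s :: t) 0 = 0 := rfl

lemma cHeight_cons_succ (s : CStep) (t : List CStep) (i : ℕ) :
    cHeight (s :: t) (i+1) = s.eff + cHeight t i := by
  simp [cHeight, List.take_succ_cons]

lemma cls_iff (s : CStep) :
    s.cls = true ↔ (s = CStep.U ∨ s = CStep.H1 ∨ s = CStep.H2) := by
  cases s <;> simp [CStep.cls]

lemma cidx_iff : ∀ (L : List CStep) (h : ℤ) (b : Bool), CIdx h b L ↔ COK h b L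
  | [], h, b => by
    simp only [CIdx, COK, List.map_nil, List.sum_nil, add_zero]
    constructor
    · rintro ⟨h1, -⟩; exact h1
    · rintro rfl
      refine ⟨rfl, fun i => by simp [cHeight], ?_, ?_, ?_, ?_, ?_⟩ <;> intro i hi <;>
        simp at hi
  | s :: t, h, b => by
    rw [show COK h b (s :: t) ↔ (0 ≤ h ∧ allowedC s h b ∧ COK (h + s.eff) s.cls t) from
      Iff.rfl, ← cidx_iff t (h + s.eff) s.cls]
    constructor
    · rintro ⟨hsum, hpos, hd1, hd2, hh1, hh2, hpre⟩
      have h0 : 0 ≤ h := by simpa [cHeight_cons_zero] using hpos 0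
      refine ⟨h0, ?_, ?_, fun i => by simpa [cHeight_cons_succ, add_assoc] using hpos (i+1),
        ?_, ?_, ?_, ?_, ?_⟩
      · -- allowedC
        cases s with
        | U => trivial
        | H0 => trivial
        | D1 => show 1 ≤ h; simpa [cHeight_cons_zero] using hd1 0 List.getElem?_cons_zero
        | H1 => show 1 ≤ h; simpa [cHeight_cons_zero] using hh1 0 List.getElem?_cons_zero
        | D2 => exact ⟨by simpa [cHeight_cons_zero] using hd2 0 List.getElem?_cons_zero, (hpre 0 (Or.inr List.getElem?_cons_zero)).1 rfl⟩
        | H2 => exact ⟨by simpa [cHeight_cons_zero] using hh2 0 List.getElem?_cons_zero, (hpre 0 (Or.inl List.getElem?_cons_zero)).1 rfl⟩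
      · -- sum
        simp only [List.map_cons, List.sum_cons] at hsum; linarith
      · intro i hi
        simpa [cHeight_cons_succ, add_assoc] using hd1 (i+1) (by simpa using hi)
      · intro i hi
        simpa [cHeight_cons_succ, add_assoc] using hd2 (i+1) (by simpa using hi)
      · intro i hi
        simpa [cHeight_cons_succ, add_assoc] using hh1 (i+1) (by simpa using hi)
      · intro i hi
        simpa [cHeight_cons_succ, add_assoc] using hh2 (i+1) (by simpa using hi)
      · intro i hi
        have H := hpre (i+1) (by simpa using hi)
        constructor
        · rintro rfl
          have := H.2 (by norm_num)
          simp only [Nat.add_sub_cancel, List.getElem?_cons_zero, Option.some.injEq] at this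
          rw [cls_iff]; exact this
        · intro h1i
          obtain ⟨j, rfl⟩ : ∃ j, i = j + 1 := ⟨i - 1, by omega⟩
          have := H.2 (by omega)
          simpa using this
    · rintro ⟨h0, hall, hsum, hpos, hd1, hd2, hh1, hh2, hpre⟩
      refine ⟨by simp only [List.map_cons, List.sum_cons]; linarith, ?_, ?_, ?_, ?_, ?_, ?_⟩
      · intro i
        cases i with
        | zero => simpa [cHeight_cons_zero] using h0
        | succ i => simpa [cHeight_cons_succ, ← add_assoc] using hpos i
      · intro i hi
        cases i with
        | zero =>
          simp only [List.getElem?_cons_zero, Option.some.injEq] at hi; subst hi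
          simpa [cHeight_cons_zero] using (show 1 ≤ h from hall)
        | succ i =>
          simp only [List.getElem?_cons_succ] at hi
          simpa [cHeight_cons_succ, ← add_assoc] using hd1 i hi
      · intro i hi
        cases i with
        | zero =>
          simp only [List.getElem?_cons_zero, Option.some.injEq] at hi; subst hi
          simpa [cHeight_cons_zero] using hall.1
        | succ i =>
          simp only [List.getElem?_cons_succ] at hi
          simpa [cHeight_cons_succ, ← add_assoc] using hd2 i hi
      · intro i hi
        cases i with
        | zero =>
          simp only [List.getElem?_cons_zero, Option.some.injEq] at hi; subst hi
          simpa [cHeight_cons_zero] using (show 1 ≤ h from hall)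
        | succ i =>
          simp only [List.getElem?_cons_succ] at hi
          simpa [cHeight_cons_succ, ← add_assoc] using hh1 i hi
      · intro i hi
        cases i with
        | zero =>
          simp only [List.getElem?_cons_zero, Option.some.injEq] at hi; subst hi
          simpa [cHeight_cons_zero] using hall.1
        | succ i =>
          simp only [List.getElem?_cons_succ] at hi
          simpa [cHeight_cons_succ, ← add_assoc] using hh2 i hi
      · intro i hi
        cases i with
        | zero =>
          rcases hi with hi | hi <;>
            (simp only [List.getElem?_cons_zero, Option.some.injEq] at hi; subst hi;
             exact ⟨fun _ => hall.2, fun h1 => absurd h1 (by norm_num)⟩)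
        | succ i =>
          simp only [List.getElem?_cons_succ] at hi
          have H := hpre i hi
          refine ⟨fun h => absurd h (by simp), fun _ => ?_⟩
          simp only [Nat.add_sub_cancel]
          cases i with
          | zero =>
            have := H.1 rfl
            rw [cls_iff] at this
            rcases this with h | h | h <;> subst h <;> simp
          | succ j =>
            have := H.2 (by omega)
            simp only [Nat.add_sub_cancel] at this
            simpa using this

def Cset : ℕ → ℤ → Bool → Finset (List CStep)
  | 0, h, _ => if h = 1 then {[]} else ∅
  | n+1, h, b => if h < 0 then ∅ else
      ((Cset n (h+1) true).image (CStep.U :: ·))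
      ∪ (if 1 ≤ h then (Cset n (h-1) false).image (CStep.D1 :: ·) else ∅)
      ∪ (if 2 ≤ h ∧ b = true then (Cset n (h-1) false).image (CStep.D2 :: ·) else ∅)
      ∪ ((Cset n h false).image (CStep.H0 :: ·))
      ∪ (if 1 ≤ h then (Cset n h true).image (CStep.H1 :: ·) else ∅)
      ∪ (if 2 ≤ h ∧ b = true then (Cset n h true).image (CStep.H2 :: ·) else ∅)

lemma cok_neg (h : ℤ) (b : Bool) (L : List CStep) (hh : h < 0) : ¬ COK h b L := by
  cases L <;> simp [COK] <;> omega

lemma mem_Cset : ∀ (n : ℕ) (h : ℤ) (b : Bool) (L : List CStep),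
    L ∈ Cset n h b ↔ (L.length = n ∧ COK h b L)
  | 0, h, b, L => by
    rw [Cset]
    split_ifs with h0
    · subst h0; cases L <;> simp [COK]
    · cases L with
      | nil => simp only [Finset.notMem_empty, false_iff, COK]; rintro ⟨-, h1⟩; omega
      | cons s t => simp [COK]
  | n+1, h, b, L => by
    rw [Cset]
    by_cases hneg : h < 0
    · rw [if_pos hneg]
      simp only [Finset.notMem_empty, false_iff]
      rintro ⟨-, hm⟩
      exact cok_neg _ _ _ hneg hm
    · rw [if_neg hneg]
      cases L with
      | nil => split_ifs <;> simp [COK]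
      | cons s t =>
        have hU := mem_Cset n (h+1) true t
        have hD := mem_Cset n (h-1) false t
        have hH := mem_Cset n h false t
        have hT := mem_Cset n h true t
        cases s <;> split_ifs <;>
          simp [COK, allowedC, CStep.eff, CStep.cls, hU, hD, hH, hT,
            show 0 ≤ h by omega, List.cons.injEq,
            show h + -1 = h - 1 by ring, show h + 0 = h by ring, *] <;>
          intros <;> first | tauto | omega

lemma disjoint_cons_imageC {a b : CStep} (hab : a ≠ b) (s t : Finset (List CStep)) :
    Disjoint (s.image (a :: ·)) (t.image (b :: ·)) := by
  simp only [Finset.disjoint_left, Finset.mem_image]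
  rintro x ⟨y, _, rfl⟩ ⟨z, _, hc⟩
  exact hab (by injection hc with h1 _; exact h1.symm)

lemma card_image_consC (s : Finset (List CStep)) (a : CStep) :
    (s.image (a :: ·)).card = s.card :=
  Finset.card_image_of_injective _ (fun _ _ h => by injection h)

lemma card_Cset : ∀ (n : ℕ) (h : ℤ) (b : Bool), (Cset n h b).card = cc n h b
  | 0, h, b => by rw [Cset, cc]; split_ifs <;> simp
  | n+1, h, b => by
    rw [Cset, cc]
    split_ifs with h0
    · simp
    all_goals
      rw [Finset.card_union_of_disjoint, Finset.card_union_of_disjoint,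
        Finset.card_union_of_disjoint, Finset.card_union_of_disjoint,
        Finset.card_union_of_disjoint]
    all_goals
      first
        | (simp only [card_image_consC, Finset.card_empty, card_Cset n]; try omega)
        | exact Finset.disjoint_empty_right _
        | exact Finset.disjoint_empty_left _
        | exact disjoint_cons_imageC (by simp) _ _
        | (simp only [Finset.disjoint_union_left]
           and_intros <;>
             first
               | exact Finset.disjoint_empty_right _
               | exact Finset.disjoint_empty_left _
               | exact disjoint_cons_imageC (by simp) _ _)

lemma getElem?_some_lt {L : List CStep} {i : ℕ} {x : CStep} (h : L[i]? = some x) :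
    i < L.length := by
  by_contra hc
  rw [List.getElem?_eq_none (by omega)] at h
  simp at h

lemma isCH_append (L' : List CStep) :
    IsCH (L' ++ [CStep.D1]) (L'.length + 1) ↔ CIdx 0 false L' := by
  have h1 : ∀ i : ℕ, i ≤ L'.length → cHeight (L' ++ [CStep.D1]) i = cHeight L' i := by
    intro i hi
    unfold cHeight
    rw [List.take_append_of_le_length hi]
  have h3 : ∀ i : ℕ, L'.length ≤ i → cHeight L' i = (L'.map CStep.eff).sum := by
    intro i hi
    unfold cHeight
    rw [List.take_of_length_le hi]
  have h2 : ∀ i : ℕ, L'.length < i →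
      cHeight (L' ++ [CStep.D1]) i = (L'.map CStep.eff).sum + (-1) := by
    intro i hi
    unfold cHeight
    rw [List.take_of_length_le (by simp; omega)]
    simp [CStep.eff]
  have g1 : ∀ i : ℕ, i < L'.length → (L' ++ [CStep.D1])[i]? = L'[i]? := by
    intro i hi
    rw [List.getElem?_append, if_pos hi]
  have g2 : (L' ++ [CStep.D1])[L'.length]? = some CStep.D1 := List.getElem?_concat_length
  have g3 : ∀ i : ℕ, L'.length < i → (L' ++ [CStep.D1])[i]? = none := by
    intro i hi
    rw [List.getElem?_eq_none (by simp; omega)]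
  constructor
  · rintro ⟨hlen, hsum, hpos, hd1, hd2, hh1, hh2, hpre⟩
    have hsum' : (L'.map CStep.eff).sum = 1 := by
      simp [CStep.eff] at hsum; linarith
    refine ⟨by rw [hsum']; ring, ?_, ?_, ?_, ?_, ?_, ?_⟩
    · intro i
      rcases le_or_gt i L'.length with hi | hi
      · have := hpos i; rw [h1 i hi] at this; simpa using this
      · rw [h3 i (by omega), hsum']; norm_num
    · intro i hi
      have him : i < L'.length := getElem?_some_lt hi
      have := hd1 i (by rw [g1 i him]; exact hi)
      rw [h1 i (le_of_lt him)] at this; simpa using this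
    · intro i hi
      have him : i < L'.length := getElem?_some_lt hi
      have := hd2 i (by rw [g1 i him]; exact hi)
      rw [h1 i (le_of_lt him)] at this; simpa using this
    · intro i hi
      have him : i < L'.length := getElem?_some_lt hi
      have := hh1 i (by rw [g1 i him]; exact hi)
      rw [h1 i (le_of_lt him)] at this; simpa using this
    · intro i hi
      have him : i < L'.length := getElem?_some_lt hi
      have := hh2 i (by rw [g1 i him]; exact hi)
      rw [h1 i (le_of_lt him)] at this; simpa using this
    · intro i hi
      have him : i < L'.length := by
        rcases hi with hi | hi <;> exact getElem?_some_lt hi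
      have H := hpre i (by
        rcases hi with hi | hi
        · exact Or.inl (by rw [g1 i him]; exact hi)
        · exact Or.inr (by rw [g1 i him]; exact hi))
      obtain ⟨Hi, Hprev⟩ := H
      refine ⟨fun h0 => absurd Hi (by omega), fun h1i => ?_⟩
      rw [← g1 (i-1) (by omega)]
      exact Hprev
  · rintro ⟨hsum, hpos, hd1, hd2, hh1, hh2, hpre⟩
    have hsum' : (L'.map CStep.eff).sum = 1 := by linarith
    refine ⟨by simp, by simp [CStep.eff, hsum'], ?_, ?_, ?_, ?_, ?_, ?_⟩
    · intro i
      rcases le_or_gt i L'.length with hi | hi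
      · rw [h1 i hi]; simpa using hpos i
      · rw [h2 i hi, hsum']; norm_num
    · intro i hi
      rcases lt_trichotomy i L'.length with him | him | him
      · rw [g1 i him] at hi
        rw [h1 i (by omega)]; simpa using hd1 i hi
      · rw [h1 i (by omega), him, h3 L'.length le_rfl, hsum']
      · rw [g3 i him] at hi; simp at hi
    · intro i hi
      rcases lt_trichotomy i L'.length with him | him | him
      · rw [g1 i him] at hi
        rw [h1 i (by omega)]; simpa using hd2 i hi
      · rw [him, g2] at hi; simp at hi
      · rw [g3 i him] at hi; simp at hi
    · intro i hi
      rcases lt_trichotomy i L'.length with him | him | him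
      · rw [g1 i him] at hi
        rw [h1 i (by omega)]; simpa using hh1 i hi
      · rw [him, g2] at hi; simp at hi
      · rw [g3 i him] at hi; simp at hi
    · intro i hi
      rcases lt_trichotomy i L'.length with him | him | him
      · rw [g1 i him] at hi
        rw [h1 i (by omega)]; simpa using hh2 i hi
      · rw [him, g2] at hi; simp at hi
      · rw [g3 i him] at hi; simp at hi
    · intro i hi
      have him : i < L'.length := by
        rcases lt_trichotomy i L'.length with h | h | h
        · exact h
        · rw [h, g2] at hi; rcases hi with hi | hi <;> simp at hi
        · rw [g3 i h] at hi; rcases hi with hi | hi <;> simp at hi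
      have H := hpre i (by
        rcases hi with hi | hi
        · exact Or.inl (by rw [← g1 i him]; exact hi)
        · exact Or.inr (by rw [← g1 i him]; exact hi))
      have h1i : 1 ≤ i := by
        rcases Nat.eq_zero_or_pos i with rfl | h
        · have := H.1 rfl; simp at this
        · exact h
      refine ⟨h1i, ?_⟩
      rw [g1 (i-1) (by omega)]
      exact H.2 h1i

/-- For every integer `n ≥ 2`, the number of paths in `CH'(n)` (paths in `CH(n)` whose
last step is `D1`) equals the number of 3-Motzkin paths of length `n - 2`. -/
theorem stmt0 (n : ℕ) (hn : 2 ≤ n) :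
    Nat.card {L : List CStep // IsCH L n ∧ L.getLast? = some CStep.D1} =
    Nat.card {L : List MStep // IsMotzkin3 L (n - 2)} := by
  obtain ⟨m, rfl⟩ : ∃ m, n = m + 2 := ⟨n - 2, by omega⟩
  have key : ∀ L : List CStep, (IsCH L (m+2) ∧ L.getLast? = some CStep.D1) ↔
      (∃ L', L = L' ++ [CStep.D1] ∧ L' ∈ Cset (m+1) 0 false) := by
    intro L
    constructor
    · rintro ⟨hch, hlast⟩
      obtain ⟨L', rfl⟩ := List.getLast?_eq_some_iff.mp hlast
      have hlen : L'.length = m + 1 := by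
        have := hch.1; simp at this; omega
      refine ⟨L', rfl, ?_⟩
      rw [mem_Cset]
      refine ⟨hlen, ?_⟩
      rw [← cidx_iff, ← isCH_append, hlen]
      exact hch
    · rintro ⟨L', rfl, hL'⟩
      rw [mem_Cset] at hL'
      obtain ⟨hlen, hok⟩ := hL'
      have h2 := (isCH_append L').mpr ((cidx_iff _ _ _).mpr hok)
      rw [hlen] at h2
      exact ⟨h2, List.getLast?_concat⟩
  have e1 : {L : List CStep // IsCH L (m+2) ∧ L.getLast? = some CStep.D1} ≃
      {L' : List CStep // L' ∈ Cset (m+1) 0 false} :=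
    { toFun := fun x => ⟨x.1.dropLast, by
        obtain ⟨L', heq, hmem⟩ := (key x.1).mp x.2
        rw [heq, List.dropLast_concat]; exact hmem⟩
      invFun := fun y => ⟨y.1 ++ [CStep.D1], (key _).mpr ⟨y.1, rfl, y.2⟩⟩
      left_inv := fun x => by
        obtain ⟨L', heq, hmem⟩ := (key x.1).mp x.2
        apply Subtype.ext
        simp only [heq, List.dropLast_concat]
      right_inv := fun y => by
        apply Subtype.ext
        simp only [List.dropLast_concat] }
  rw [Nat.card_congr e1, Nat.card_eq_finsetCard, card_Cset, card_motzkin]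
  have hAB := (ccAB m).1 0 le_rfl
  rw [mm_neg m (0-2) (by norm_num), mm_neg m (0-1) (by norm_num)] at hAB
  simpa using hAB
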